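/- For every n ≥ 0, the following identity holds in the polynomial ring ℤ[x,y]: γ_{n+1}(x,y) = (x + n·y)·γ_n(x,y) + y·(1−x)·(∂/∂x)γ_n(x,y) + y·(1−2y)·(∂/∂y)γ_n(x,y), where γ_n(x,y) = Σ_{i,j ≥ 0} γ_{n,i,j} x^i y^j. -/

import Mathlib

open Finset MvPolynomial

/-- The numbers `γ_{n,i,j}`: zero for negative `i` or `j`, with `γ_{0,0,0} = 1`,
`γ_{0,i,j} = 0` for `(i,j) ≠ (0,0)`, and the recurrence
`γ_{n+1,i,j} = γ_{n,i−1,j} + (1+i)γ_{n,i+1,j−1} + jγ_{n,i,j} + (n−i−2j+2)γ_{n,i,j−1}`. -/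
def gam : ℕ → ℤ → ℤ → ℤ
  | 0, i, j => if i = 0 ∧ j = 0 then 1 else 0
  | n + 1, i, j =>
      if i < 0 ∨ j < 0 then 0
      else gam n (i - 1) j + (1 + i) * gam n (i + 1) (j - 1) + j * gam n i j +
        ((n : ℤ) - i - 2 * j + 2) * gam n i (j - 1)

/-- `γ_n(x,y) = Σ_{i,j≥0} γ_{n,i,j} x^i y^j ∈ ℤ[x,y]` (a finite sum, since `γ_{n,i,j} = 0`
unless `0 ≤ i ≤ n` and `0 ≤ j ≤ ⌊(n−i)/2⌋`); here `x = X 0`, `y = X 1`. -/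
noncomputable def gamPoly (n : ℕ) : MvPolynomial (Fin 2) ℤ :=
  ∑ i ∈ range (n + 1), ∑ j ∈ range ((n - i) / 2 + 1),
    MvPolynomial.C (gam n i j) * X 0 ^ i * X 1 ^ j

lemma gam_neg : ∀ (n : ℕ) (i j : ℤ), i < 0 ∨ j < 0 → gam n i j = 0
  | 0, i, j, h => by rw [gam]; split <;> [omega; rfl]
  | (n+1), i, j, h => by rw [gam]; split <;> [rfl; omega]

lemma gam_vanish : ∀ (n : ℕ) (i j : ℤ), (n : ℤ) < i + 2 * j → gam n i j = 0
  | 0, i, j, h => by rw [gam]; split <;> [omega; rfl]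
  | (n+1), i, j, h => by
    rw [gam]
    split
    · rfl
    · rename_i hij
      push_neg at hij
      rw [gam_vanish n (i-1) j (by push_cast at h ⊢; omega),
          gam_vanish n (i+1) (j-1) (by push_cast at h ⊢; omega),
          gam_vanish n i j (by push_cast at h ⊢; omega)]
      by_cases h4 : (n : ℤ) < i + 2 * (j - 1)
      · rw [gam_vanish n i (j-1) h4]; ring
      · have : (n : ℤ) - i - 2 * j + 2 = 0 := by push_cast at h; omega
        rw [this]; ring

lemma coeff_pderiv {σ : Type*} [DecidableEq σ] (i : σ) (m : σ →₀ ℕ) (p : MvPolynomial σ ℤ) :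
    coeff m (pderiv i p) = ((m i : ℤ) + 1) * coeff (m + Finsupp.single i 1) p := by
  induction p using MvPolynomial.induction_on' with
  | monomial s a =>
    rw [pderiv_monomial, coeff_monomial, coeff_monomial]
    by_cases hs : s i = 0
    · have h1 : ¬ (s = m + Finsupp.single i 1) := by
        intro h; rw [h] at hs; simp at hs
      rw [if_neg h1]
      split
      · simp [hs]
      · ring
    · have key : s - Finsupp.single i 1 = m ↔ s = m + Finsupp.single i 1 := by
        constructor
        · rintro rfl
          exact (tsub_add_cancel_of_le (Finsupp.single_le_iff.mpr (by omega))).symm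
        · rintro rfl; exact add_tsub_cancel_right _ _
      by_cases h2 : s = m + Finsupp.single i 1
      · rw [if_pos (key.mpr h2), if_pos h2]
        have : s i = m i + 1 := by rw [h2]; simp
        rw [this]; push_cast; ring
      · rw [if_neg (fun h => h2 (key.mp h)), if_neg h2]; ring
  | add p q hp hq => rw [map_add, coeff_add, coeff_add, hp, hq]; ring

lemma coeff_gamPoly (n : ℕ) (m : Fin 2 →₀ ℕ) :
    coeff m (gamPoly n) = gam n (m 0) (m 1) := by
  classical
  have key : ∀ i j : ℕ, (Finsupp.single (0 : Fin 2) i + Finsupp.single 1 j = m)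
      ↔ (i = m 0 ∧ j = m 1) := by
    intro i j
    constructor
    · rintro rfl; simp [Finsupp.single_apply]
    · rintro ⟨rfl, rfl⟩
      ext a
      fin_cases a <;> simp [Finsupp.single_apply]
  rw [gamPoly]
  rw [coeff_sum]
  simp_rw [coeff_sum, X_pow_eq_monomial, mul_assoc, monomial_mul, one_mul,
    C_mul_monomial, mul_one, coeff_monomial]
  simp_rw [key]
  by_cases h0 : m 0 ≤ n
  · rw [Finset.sum_eq_single (m 0)]
    · by_cases h1 : m 1 ≤ (n - m 0) / 2
      · rw [Finset.sum_eq_single (m 1)]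
        · simp
        · intro b _ hb; simp [hb]
        · intro h; exact absurd (mem_range.mpr (by omega)) h
      · rw [Finset.sum_eq_zero, gam_vanish n (m 0) (m 1) (by omega)]
        intro b hb
        rw [if_neg]
        rintro ⟨-, rfl⟩
        exact h1 (by omega ∘ mem_range.mp <| hb)
    · intro a _ ha
      exact Finset.sum_eq_zero fun b _ => if_neg (fun h => ha h.1)
    · intro h; exact absurd (mem_range.mpr (by omega)) h
  · rw [Finset.sum_eq_zero, gam_vanish n (m 0) (m 1) (by omega)]
    intro a ha
    exact Finset.sum_eq_zero fun b _ => if_neg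
      (fun h => h0 (by have := mem_range.mp ha; omega))

/-- `γ_{n+1}(x,y) = (x+ny)γ_n(x,y) + y(1−x)(∂/∂x)γ_n(x,y) + y(1−2y)(∂/∂y)γ_n(x,y)`. -/
theorem stmt7 (n : ℕ) :
    gamPoly (n + 1) =
      (X 0 + (n : MvPolynomial (Fin 2) ℤ) * X 1) * gamPoly n +
        X 1 * (1 - X 0) * pderiv 0 (gamPoly n) +
        X 1 * (1 - 2 * X 1) * pderiv 1 (gamPoly n) := by
  classical
  have expand :
      (X 0 + (n : MvPolynomial (Fin 2) ℤ) * X 1) * gamPoly n +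
        X 1 * (1 - X 0) * pderiv 0 (gamPoly n) +
        X 1 * (1 - 2 * X 1) * pderiv 1 (gamPoly n) =
      X 0 * gamPoly n + C (n : ℤ) * (X 1 * gamPoly n)
        + (X 1 * pderiv 0 (gamPoly n) - X 0 * (X 1 * pderiv 0 (gamPoly n)))
        + (X 1 * pderiv 1 (gamPoly n)
            - C (2:ℤ) * (X 1 * (X 1 * pderiv 1 (gamPoly n)))) := by
    rw [map_natCast (C : ℤ →+* MvPolynomial (Fin 2) ℤ) n,
      map_ofNat (C : ℤ →+* MvPolynomial (Fin 2) ℤ) 2]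
    ring
  rw [expand]
  ext m
  rw [coeff_gamPoly]
  simp only [coeff_add, coeff_sub, coeff_C_mul, coeff_X_mul', _root_.coeff_pderiv, coeff_gamPoly]
  simp only [Finsupp.mem_support_iff, Finsupp.tsub_apply, Finsupp.add_apply,
    Finsupp.single_apply, ne_eq]
  norm_num
  generalize m 0 = a, m 1 = b
  have cast1 : ∀ k : ℕ, ((k + 1 - 1 : ℕ) : ℤ) = (k : ℤ) := by intro k; push_cast [Nat.add_sub_cancel]; ring
  have e1 : (if a = 0 then (0:ℤ) else gam n ((a - 1 : ℕ) : ℤ) (b : ℤ))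
      = gam n ((a : ℤ) - 1) (b : ℤ) := by
    rcases a with _ | a
    · rw [if_pos rfl, gam_neg n _ _ (Or.inl (by norm_num))]
    · rw [if_neg (Nat.succ_ne_zero a), cast1, (by push_cast; ring : ((a + 1 : ℕ) : ℤ) - 1 = (a : ℤ))]
  have e2 : (if b = 0 then (0:ℤ) else (n : ℤ) * gam n (a : ℤ) ((b - 1 : ℕ) : ℤ))
      = (n : ℤ) * gam n (a : ℤ) ((b : ℤ) - 1) := by
    rcases b with _ | b
    · rw [if_pos rfl, gam_neg n _ _ (Or.inr (by norm_num)), mul_zero]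
    · rw [if_neg (Nat.succ_ne_zero b), cast1, (by push_cast; ring : ((b + 1 : ℕ) : ℤ) - 1 = (b : ℤ))]
  have e3 : (if b = 0 then (0:ℤ) else ((a : ℤ) + 1) * gam n ((a : ℤ) + 1) ((b - 1 : ℕ) : ℤ))
      = ((a : ℤ) + 1) * gam n ((a : ℤ) + 1) ((b : ℤ) - 1) := by
    rcases b with _ | b
    · rw [if_pos rfl, gam_neg n _ _ (Or.inr (by norm_num)), mul_zero]
    · rw [if_neg (Nat.succ_ne_zero b), cast1, (by push_cast; ring : ((b + 1 : ℕ) : ℤ) - 1 = (b : ℤ))]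
  have e4 : (if a = 0 then (0:ℤ) else if b = 0 then (0:ℤ) else
        (((a - 1 : ℕ) : ℤ) + 1) * gam n (((a - 1 : ℕ) : ℤ) + 1) ((b - 1 : ℕ) : ℤ))
      = (a : ℤ) * gam n (a : ℤ) ((b : ℤ) - 1) := by
    rcases a with _ | a
    · rw [if_pos rfl]; norm_num
    · rw [if_neg (Nat.succ_ne_zero a), cast1]
      rcases b with _ | b
      · rw [if_pos rfl, gam_neg n _ _ (Or.inr (by norm_num)), mul_zero]
      · rw [if_neg (Nat.succ_ne_zero b), cast1,
          (by push_cast; ring : ((b + 1 : ℕ) : ℤ) - 1 = (b : ℤ)),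
          (by push_cast; ring : ((a + 1 : ℕ) : ℤ) = (a : ℤ) + 1)]
  have e5 : (if b = 0 then (0:ℤ) else (((b - 1 : ℕ) : ℤ) + 1) * gam n (a : ℤ) (((b - 1 : ℕ) : ℤ) + 1))
      = (b : ℤ) * gam n (a : ℤ) (b : ℤ) := by
    rcases b with _ | b
    · rw [if_pos rfl]; norm_num
    · rw [if_neg (Nat.succ_ne_zero b), cast1,
        (by push_cast; ring : ((b : ℕ) : ℤ) + 1 = ((b + 1 : ℕ) : ℤ))]
  have e6 : (if b = 0 then (0:ℤ) else if b - 1 = 0 then (0:ℤ) else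
        2 * ((((b - 1 - 1 : ℕ) : ℤ) + 1) * gam n (a : ℤ) (((b - 1 - 1 : ℕ) : ℤ) + 1)))
      = 2 * ((b : ℤ) - 1) * gam n (a : ℤ) ((b : ℤ) - 1) := by
    rcases b with _ | b
    · rw [if_pos rfl, gam_neg n _ _ (Or.inr (by norm_num))]; norm_num
    · rw [if_neg (Nat.succ_ne_zero b), Nat.add_sub_cancel]
      rcases b with _ | b
      · rw [if_pos rfl]; norm_num
      · rw [if_neg (Nat.succ_ne_zero b), Nat.add_sub_cancel,
          (by push_cast; ring : ((b : ℕ) : ℤ) + 1 = ((b + 1 + 1 : ℕ) : ℤ) - 1)]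
        ring
  rw [e1, e2, e3, e4, e5, e6, gam, if_neg (by omega)]
  ring
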